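/- Let R be a commutative integral domain and let A be an Azumaya algebra over R. Let e ∈ A be a nonzero idempotent (e² = e, e ≠ 0). Then e does not belong to any prime two-sided ideal of A; that is, for every prime two-sided ideal P of A, e ∉ P. -/

import Mathlib

open scoped TensorProduct

/-- The canonical `R`-linear map `A ⊗[R] Aᵐᵒᵖ →ₗ[R] End_R(A)` sending `a ⊗ b` to the
endomorphism `x ↦ a * x * b`. -/
noncomputable def mulLeftRight (R A : Type*) [CommRing R] [Ring A] [Algebra R A] :
    A ⊗[R] Aᵐᵒᵖ →ₗ[R] Module.End R A :=
  TensorProduct.lift <| LinearMap.mk₂ R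
    (fun a b => LinearMap.mulRight R b.unop ∘ₗ LinearMap.mulLeft R a)
    (fun a a' b => by ext x; simp [add_mul])
    (fun r a b => by ext x; simp [smul_mul_assoc])
    (fun a b b' => by ext x; simp [mul_add])
    (fun r a b => by ext x; simp [mul_smul_comm])

/-- `A` is an Azumaya algebra over the commutative ring `R`: it is a finitely generated,
projective and faithful `R`-module and the natural map `A ⊗[R] Aᵐᵒᵖ → End_R(A)`,
`a ⊗ b ↦ (x ↦ a * x * b)`, is bijective. -/
def IsAzumaya' (R A : Type*) [CommRing R] [Ring A] [Algebra R A] : Prop :=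
  Module.Finite R A ∧ Module.Projective R A ∧ FaithfulSMul R A ∧
    Function.Bijective (mulLeftRight R A)

/-- A subset `I` of a ring `B` is a two-sided ideal: it contains `0`, is closed under
addition, and is closed under multiplication by arbitrary ring elements on both sides. -/
def IsTwoSidedIdealSet {B : Type*} [Ring B] (I : Set B) : Prop :=
  (0 : B) ∈ I ∧ (∀ a ∈ I, ∀ b ∈ I, a + b ∈ I) ∧
    (∀ (x : B), ∀ a ∈ I, x * a ∈ I) ∧ (∀ (x : B), ∀ a ∈ I, a * x ∈ I)

/-- A subset `I` of a ring `B` is a prime two-sided ideal: it is a proper two-sided ideal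
such that whenever `a * x * b ∈ I` for all `x`, either `a ∈ I` or `b ∈ I`. -/
def IsPrimeTwoSidedIdeal {B : Type*} [Ring B] (I : Set B) : Prop :=
  IsTwoSidedIdealSet I ∧ I ≠ Set.univ ∧
    ∀ a b : B, (∀ x : B, a * x * b ∈ I) → a ∈ I ∨ b ∈ I

lemma mulLeftRight_tmul {R A : Type*} [CommRing R] [Ring A] [Algebra R A]
    (a : A) (b : Aᵐᵒᵖ) (x : A) :
    mulLeftRight R A (a ⊗ₜ[R] b) x = a * x * b.unop := by
  simp [mulLeftRight]

lemma mulLeftRight_mem {R A : Type*} [CommRing R] [Ring A] [Algebra R A]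
    {P : Set A} (hP : IsTwoSidedIdealSet P) {e : A} (heP : e ∈ P)
    (t : A ⊗[R] Aᵐᵒᵖ) : mulLeftRight R A t e ∈ P := by
  obtain ⟨h0, hadd, hleft, hright⟩ := hP
  induction t using TensorProduct.induction_on with
  | zero => simpa using h0
  | tmul a b =>
      rw [mulLeftRight_tmul]
      exact hright _ _ (hleft _ _ heP)
  | add x y hx hy =>
      rw [map_add]
      exact hadd _ hx _ hy

/-- Let `A` be an Azumaya algebra over a commutative integral domain `R` and let `e` be a
nonzero idempotent of `A`. Then `e` lies in no prime two-sided ideal of `A`. -/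
theorem idempotent_not_mem_prime_of_azumaya {R A : Type*} [CommRing R] [IsDomain R]
    [Ring A] [Algebra R A] (hAz : IsAzumaya' R A)
    (e : A) (he : e * e = e) (he0 : e ≠ 0)
    (P : Set A) (hP : IsPrimeTwoSidedIdeal P) : e ∉ P := by
  obtain ⟨hPid, hPne, _⟩ := hP
  intro heP
  have h0 : (0 : A) ∈ P := hPid.1
  have hadd := hPid.2.1
  have hleft := hPid.2.2.1
  have hright := hPid.2.2.2
  -- `1 ∉ P`
  have h1P : (1 : A) ∉ P := by
    intro h1
    apply hPne
    ext x
    simp only [Set.mem_univ, iff_true]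
    simpa using hleft x 1 h1
  -- the contraction ideal `p`
  set p : Ideal R :=
    { carrier := {r | algebraMap R A r ∈ P}
      add_mem' := fun {a b} ha hb => by simpa [map_add] using hadd _ ha _ hb
      zero_mem' := by simpa using h0
      smul_mem' := fun c {r} hr => by
        simpa [Algebra.smul_def, map_mul] using hleft (algebraMap R A c) _ hr } with hp
  have hmemp : ∀ r : R, r ∈ p ↔ algebraMap R A r ∈ P := fun r => Iff.rfl
  -- dual basis data
  obtain ⟨n, f, g, hfsurj, hginj, hfg⟩ :=
    have := hAz.1; have := hAz.2.1
    Module.Finite.exists_comp_eq_id_of_projective R A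
  -- the coefficients of `e` lie in `p`
  have hcoef : ∀ j : Fin n, g e j ∈ p := by
    intro j
    -- the linear map `x ↦ algebraMap R A (g x j)` is in the image of `mulLeftRight`
    obtain ⟨t, ht⟩ := hAz.2.2.2.2
      ((Algebra.linearMap R A) ∘ₗ (LinearMap.proj j) ∘ₗ g)
    have : algebraMap R A (g e j) = mulLeftRight R A t e := by
      rw [ht]; rfl
    rw [hmemp, this]
    exact mulLeftRight_mem hPid heP t
  -- `e = ∑ j, g e j • xⱼ`
  have hdual : ∀ x : A, x = ∑ j : Fin n, g x j • f (fun i => if j = i then 1 else 0) := by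
    intro x
    conv_lhs => rw [show x = f (g x) from (LinearMap.congr_fun hfg x).symm]
    exact LinearMap.pi_apply_eq_sum_univ f (g x)
  -- the bilinear map `(a, b) ↦ a * e * b`
  set β : A →ₗ[R] A →ₗ[R] A := LinearMap.mk₂ R (fun a b => a * e * b)
    (fun a a' b => by simp [add_mul])
    (fun r a b => by simp [smul_mul_assoc])
    (fun a b b' => by simp [mul_add])
    (fun r a b => by simp [mul_smul_comm]) with hβ
  set M : Submodule R A := Submodule.map₂ β ⊤ ⊤ with hM
  have heM : e ∈ M := by
    have : β 1 1 ∈ M := Submodule.apply_mem_map₂ β trivial trivial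
    simpa [hβ] using this
  have hMfg : M.FG := Submodule.FG.map₂ β hAz.1.fg_top hAz.1.fg_top
  have hMle : M ≤ p • M := by
    rw [hM, Submodule.map₂_le]
    intro a _ b _
    have key : (∑ j : Fin n, g e j • (a * e * (f (fun i => if j = i then 1 else 0) * b)))
        = a * e * b := by
      have h1 : (∑ j : Fin n, g e j • (a * e * (f (fun i => if j = i then 1 else 0) * b)))
          = a * e * ((∑ j : Fin n, g e j • f (fun i => if j = i then 1 else 0)) * b) := by
        simp only [Finset.sum_mul, Finset.mul_sum, smul_mul_assoc, mul_smul_comm, mul_assoc]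
      rw [h1, ← hdual e, ← mul_assoc, mul_assoc a e e, he]
    have hb : β a b = ∑ j : Fin n, g e j •
        (a * e * (f (fun i => if j = i then 1 else 0) * b)) := by
      rw [hβ, LinearMap.mk₂_apply, ← key]
    rw [hb]
    refine Submodule.sum_mem _ fun j _ => Submodule.smul_mem_smul (hcoef j) ?_
    exact Submodule.apply_mem_map₂ β trivial trivial
  obtain ⟨r, hr1, hr0⟩ :=
    Submodule.exists_sub_one_mem_and_smul_eq_zero_of_fg_of_le_smul p M hMfg hMle
  have hre : r • e = 0 := hr0 e heM
  have hrne : r ≠ 0 := by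
    intro h
    apply h1P
    have : (1 : R) ∈ p := by
      have : -(1 : R) ∈ p := by simpa [h] using hr1
      simpa using p.neg_mem this
    simpa using (hmemp 1).mp this
  -- torsion-freeness via the embedding `g`
  have : g e = 0 := by
    have h1 : r • g e = 0 := by rw [← map_smul, hre, map_zero]
    rcases smul_eq_zero.mp h1 with h | h
    · exact absurd h hrne
    · exact h
  exact he0 (hginj (by rw [this, map_zero]))
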